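/- Every full planar 3-tree on n vertices admits a path cover of size at most ⌈n/3⌉. -/

import Mathlib

open SimpleGraph

/-- A simple path in a graph `G`, given by its two endpoints and a walk between them
which is a path and is non-trivial (contains at least one edge). -/
structure PathIn {V : Type*} (G : SimpleGraph V) where
  a : V
  b : V
  walk : G.Walk a b
  isPath : walk.IsPath
  nonNil : ¬ walk.Nil

/-- A path cover of `G`: a collection of pairwise edge-disjoint simple paths
whose union covers every edge of `G` exactly once. -/
def IsPathCover {V : Type*} (G : SimpleGraph V) (ps : List (PathIn G)) : Prop :=
  (ps.Pairwise fun p q => ∀ e ∈ p.walk.edges, e ∉ q.walk.edges) ∧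
  ∀ e : Sym2 V, e ∈ G.edgeSet ↔ ∃ p ∈ ps, e ∈ p.walk.edges

/-- Vertices of a planar 3-tree: the three vertices of the initial triangle (`Sum.inl`)
together with the stacked vertices, identified with their addresses in the stacking
tree (`Sum.inr`). -/
abbrev Vtx : Type := Fin 3 ⊕ List (Fin 3)

/-- Given the current address prefix, the current triangular face, and the remaining
address, compute the triangular face at that address. Stacking the vertex with
address `pre` into the face (x, y, z) creates the three faces obtained by replacing
one of x, y, z by the new vertex. -/
def faceAux : List (Fin 3) → (Vtx × Vtx × Vtx) → List (Fin 3) → Vtx × Vtx × Vtx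
  | _, f, [] => f
  | pre, (x, y, z), i :: rest =>
      faceAux (pre ++ [i])
        (if i = 0 then (Sum.inr pre, y, z)
         else if i = 1 then (x, Sum.inr pre, z)
         else (x, y, Sum.inr pre)) rest

/-- The triangular face into which the vertex with address `p` is stacked. -/
def faceAt (p : List (Fin 3)) : Vtx × Vtx × Vtx :=
  faceAux [] (Sum.inl 0, Sum.inl 1, Sum.inl 2) p

/-- A stacking tree, encoded as a finite, prefix-closed set of addresses: each element
is a stacked vertex, and the (up to three) children of the vertex at address `p` are
the addresses `p ++ [i]`, corresponding to the three faces created by stacking it. -/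
def IsStackTree (T : Finset (List (Fin 3))) : Prop :=
  ∀ (p : List (Fin 3)) (i : Fin 3), p ++ [i] ∈ T → p ∈ T

/-- The planar 3-tree determined by a stacking tree `T`: start from the triangle on the
three `Sum.inl` vertices, and join each stacked vertex to the three vertices of the
face into which it is stacked. It has `T.card + 3` vertices. -/
def graphOf (T : Finset (List (Fin 3))) : SimpleGraph Vtx :=
  SimpleGraph.fromEdgeSet
    ({s(Sum.inl 0, Sum.inl 1), s(Sum.inl 0, Sum.inl 2), s(Sum.inl 1, Sum.inl 2)} ∪
      {e | ∃ p ∈ T, ∃ x : Vtx,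
        (x = (faceAt p).1 ∨ x = (faceAt p).2.1 ∨ x = (faceAt p).2.2) ∧
        e = s(Sum.inr p, x)})

/-- A planar 3-tree is full if its stacking tree is a proper ternary tree: it has a
root and every node has either exactly three children or none. -/
def IsFull (T : Finset (List (Fin 3))) : Prop :=
  ([] : List (Fin 3)) ∈ T ∧
  ∀ p ∈ T, (∀ i : Fin 3, p ++ [i] ∈ T) ∨ (∀ i : Fin 3, p ++ [i] ∉ T)

/- ###### auxiliary development ###### -/
namespace PC

/-- rank of a vertex -/
def rank : Vtx → ℕ
  | .inl _ => 0
  | .inr q => q.length + 1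

/-- the cone of addresses extending `pre` -/
def Cone (pre : List (Fin 3)) (w : Vtx) : Prop :=
  ∃ a : List (Fin 3), w = Sum.inr (pre ++ a)

lemma cone_mono {pre : List (Fin 3)} (c : Fin 3) {w : Vtx} (h : Cone (pre ++ [c]) w) :
    Cone pre w := by
  obtain ⟨a, rfl⟩ := h; exact ⟨c :: a, by simp⟩

lemma cone_self (pre : List (Fin 3)) : Cone pre (Sum.inr pre) := ⟨[], by simp⟩

lemma cone_rank {pre : List (Fin 3)} {w : Vtx} (h : Cone pre w) : pre.length < rank w := by
  obtain ⟨a, rfl⟩ := h; simp [rank]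

lemma cone_disj {pre : List (Fin 3)} {c c' : Fin 3} (hcc : c ≠ c') {w : Vtx}
    (h : Cone (pre ++ [c]) w) (h' : Cone (pre ++ [c']) w) : False := by
  obtain ⟨a, rfl⟩ := h
  obtain ⟨a', ha⟩ := h'
  simp only [Sum.inr.injEq] at ha
  rw [List.append_assoc, List.append_assoc, List.append_right_inj] at ha
  simp only [List.singleton_append, List.cons.injEq] at ha
  exact hcc ha.1

lemma cone_rank_out {pre : List (Fin 3)} {w : Vtx} (hw : rank w ≤ pre.length) :
    ¬ Cone pre w := fun h => by have := cone_rank h; omega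

/-- list of edges of a path given by its vertex list -/
def ELl : List Vtx → List (Sym2 Vtx)
  | [] => []
  | [_] => []
  | a :: b :: l => s(a, b) :: ELl (b :: l)

@[simp] lemma ELl_nil : ELl [] = [] := rfl
@[simp] lemma ELl_single (a : Vtx) : ELl [a] = [] := rfl
@[simp] lemma ELl_cons_cons (a b : Vtx) (l : List Vtx) :
    ELl (a :: b :: l) = s(a, b) :: ELl (b :: l) := rfl

lemma ELl_cons_head {l : List Vtx} {b : Vtx} (h : l.head? = some b) (a : Vtx) :
    ELl (a :: l) = s(a, b) :: ELl l := by
  cases l with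
  | nil => simp at h
  | cons c l => simp at h; subst h; rfl

lemma ELl_append {l1 : List Vtx} {x : Vtx} (h : l1.getLast? = some x) (l2 : List Vtx) :
    ELl (l1 ++ l2) = ELl l1 ++ ELl (x :: l2) := by
  induction l1 with
  | nil => simp at h
  | cons a l1 ih =>
    cases l1 with
    | nil => simp at h; subst h; cases l2 <;> simp
    | cons b l1 =>
      rw [List.getLast?_cons_cons] at h
      have := ih h
      simp only [List.cons_append, ELl_cons_cons] at *
      rw [this]

lemma ELl_reverse (l : List Vtx) : (ELl l.reverse : Multiset (Sym2 Vtx)) = (ELl l : Multiset _) := by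
  induction l with
  | nil => rfl
  | cons a l ih =>
    cases l with
    | nil => rfl
    | cons b l =>
      have hrev : (b :: l).reverse.getLast? = some b := by
        simp [List.getLast?_reverse]
      have h1 : (a :: b :: l).reverse = (b :: l).reverse ++ [a] := by simp
      rw [h1, ELl_append hrev]
      rw [← Multiset.coe_add, ih]
      show (↑(ELl (b :: l)) + ↑([s(b, a)]) : Multiset (Sym2 Vtx)) = ↑(s(a, b) :: ELl (b :: l))
      have : (s(a, b) :: ELl (b :: l) : List (Sym2 Vtx)) = [s(a,b)] ++ ELl (b :: l) := rfl
      rw [this, ← Multiset.coe_add, add_comm]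
      congr 1
      rw [Sym2.eq_swap]

lemma ELl_subset_of_mem {l : List Vtx} {w1 w2 : Vtx} (h : s(w1, w2) ∈ ELl l) :
    w1 ∈ l ∧ w2 ∈ l := by
  induction l with
  | nil => simp at h
  | cons a l ih =>
    cases l with
    | nil => simp at h
    | cons b l =>
      rw [ELl_cons_cons] at h
      rcases List.mem_cons.mp h with h | h
      · rw [Sym2.eq_iff] at h
        rcases h with ⟨rfl, rfl⟩ | ⟨rfl, rfl⟩ <;> simp
      · have := ih h
        exact ⟨List.mem_cons_of_mem _ this.1, List.mem_cons_of_mem _ this.2⟩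



variable {G : SimpleGraph Vtx}

/-- build a walk from a chain -/
def mkW (G : SimpleGraph Vtx) : (a b : Vtx) → (l : List Vtx) → List.Chain G.Adj a l →
    (a :: l).getLast (List.cons_ne_nil a l) = b → G.Walk a b
  | _, _, [], _, hb => hb ▸ SimpleGraph.Walk.nil
  | a, b, c :: l, h, hb =>
      SimpleGraph.Walk.cons (List.chain_cons.mp h).1
        (mkW G c b l (List.chain_cons.mp h).2 (by rw [← hb]; exact (List.getLast_cons _).symm))

@[simp] lemma mkW_support (a b : Vtx) (l : List Vtx) (h : List.Chain G.Adj a l)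
    (hb : (a :: l).getLast (List.cons_ne_nil a l) = b) :
    (mkW G a b l h hb).support = a :: l := by
  induction l generalizing a with
  | nil => subst hb; rfl
  | cons c l ih => rw [mkW]; rw [SimpleGraph.Walk.support_cons]; exact congrArg _ (ih _ _ _)

@[simp] lemma mkW_edges (a b : Vtx) (l : List Vtx) (h : List.Chain G.Adj a l)
    (hb : (a :: l).getLast (List.cons_ne_nil a l) = b) :
    (mkW G a b l h hb).edges = ELl (a :: l) := by
  induction l generalizing a with
  | nil => subst hb; rfl
  | cons c l ih => rw [mkW]; rw [SimpleGraph.Walk.edges_cons]; exact congrArg _ (ih _ _ _)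

lemma mkW_not_nil (a b : Vtx) (c : Vtx) (l : List Vtx) (h : List.Chain G.Adj a (c :: l))
    (hb : (a :: c :: l).getLast (List.cons_ne_nil _ _) = b) :
    ¬ (mkW G a b (c :: l) h hb).Nil := by
  rw [mkW]; exact SimpleGraph.Walk.not_nil_cons

/-- build a `PathIn` from a nodup chain with at least one edge -/
def mkPath (G : SimpleGraph Vtx) (a c : Vtx) (l : List Vtx)
    (hch : List.Chain G.Adj a (c :: l)) (hnd : (a :: c :: l).Nodup) : PathIn G where
  a := a
  b := (a :: c :: l).getLast (List.cons_ne_nil _ _)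
  walk := mkW G a _ (c :: l) hch rfl
  isPath := by rw [SimpleGraph.Walk.isPath_def, mkW_support]; exact hnd
  nonNil := mkW_not_nil _ _ _ _ _ _

@[simp] lemma mkPath_edges (a c : Vtx) (l : List Vtx)
    (hch : List.Chain G.Adj a (c :: l)) (hnd : (a :: c :: l).Nodup) :
    (mkPath G a c l hch hnd).walk.edges = ELl (a :: c :: l) := by
  unfold mkPath; exact mkW_edges _ _ _ _ _

/-- chain from edge membership -/
lemma chain_of_ELl (a : Vtx) (l : List Vtx) (h : ∀ e ∈ ELl (a :: l), e ∈ G.edgeSet) :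
    List.Chain G.Adj a l := by
  induction l generalizing a with
  | nil => exact List.Chain.nil
  | cons c l ih =>
    refine List.chain_cons.mpr ⟨?_, ih c fun e he => h e ?_⟩
    · exact (SimpleGraph.mem_edgeSet (G := G)).mp (h s(a, c) (by simp))
    · rw [ELl_cons_cons]; exact List.mem_cons_of_mem _ he


/-- full ternary trees -/
inductive FT : Type
  | lf : FT
  | nd (t0 t1 t2 : FT) : FT

namespace FT

/-- number of internal nodes -/
def kk : FT → ℕ
  | lf => 0
  | nd t0 t1 t2 => 1 + t0.kk + t1.kk + t2.kk

/-- number of nodes -/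
def Nn : FT → ℕ
  | lf => 1
  | nd t0 t1 t2 => 1 + t0.Nn + t1.Nn + t2.Nn

lemma Nn_eq (t : FT) : t.Nn = 3 * t.kk + 1 := by
  induction t with
  | lf => rfl
  | nd t0 t1 t2 h0 h1 h2 => simp [Nn, kk, h0, h1, h2]; ring

/-- address membership -/
def hasAddr : FT → List (Fin 3) → Prop
  | lf, a => a = []
  | nd _ _ _, [] => True
  | nd t0 t1 t2, c :: rest => hasAddr (![t0, t1, t2] c) rest

@[simp] lemma hasAddr_nil_nd (t0 t1 t2 : FT) : hasAddr (nd t0 t1 t2) [] := trivial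

end FT

/-- face as a function, evolving along an address -/
def fgo (f : Fin 3 → Vtx) (pre : List (Fin 3)) : List (Fin 3) → (Fin 3 → Vtx)
  | [] => f
  | c :: rest => fgo (Function.update f c (Sum.inr pre)) (pre ++ [c]) rest

lemma face_trip (l : List (Fin 3)) (f : Fin 3 → Vtx) (pre : List (Fin 3)) :
    faceAux pre (f 0, f 1, f 2) l = (fgo f pre l 0, fgo f pre l 1, fgo f pre l 2) := by
  induction l generalizing f pre with
  | nil => rfl
  | cons c rest ih =>
    have h : faceAux pre (f 0, f 1, f 2) (c :: rest) =
        faceAux (pre ++ [c]) ((Function.update f c (Sum.inr pre)) 0,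
          (Function.update f c (Sum.inr pre)) 1, (Function.update f c (Sum.inr pre)) 2) rest := by
      show faceAux (pre ++ [c]) _ rest = _
      congr 1
      fin_cases c <;> simp [Function.update]
    rw [h, ih]
    rfl

lemma fgo_rank (l : List (Fin 3)) (f : Fin 3 → Vtx) (pre : List (Fin 3))
    (hf : ∀ c, PC.rank (f c) ≤ pre.length) (m : Fin 3) :
    PC.rank (fgo f pre l m) ≤ pre.length + l.length := by
  induction l generalizing f pre with
  | nil => simpa [fgo] using hf m
  | cons c rest ih =>
    have := ih (Function.update f c (Sum.inr pre)) (pre ++ [c]) (fun c' => by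
      by_cases hc : c' = c
      · subst hc; simp [Function.update, PC.rank]
      · rw [Function.update_of_ne hc]; have := hf c'; simp; omega)
    exact le_of_le_of_eq this (by simp; omega)

/-- the three edges of a stacked vertex -/
def star (f : Fin 3 → Vtx) (pre : List (Fin 3)) : Multiset (Sym2 Vtx) :=
  {s(Sum.inr pre, f 0), s(Sum.inr pre, f 1), s(Sum.inr pre, f 2)}

/-- edge multiset of the gadget of a subtree -/
def gE (f : Fin 3 → Vtx) (pre : List (Fin 3)) : FT → Multiset (Sym2 Vtx)
  | .lf => star f pre
  | .nd t0 t1 t2 =>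
      star f pre +
      (gE (Function.update f 0 (Sum.inr pre)) (pre ++ [0]) t0 +
       gE (Function.update f 1 (Sum.inr pre)) (pre ++ [1]) t1 +
       gE (Function.update f 2 (Sum.inr pre)) (pre ++ [2]) t2)


lemma star_mem {f : Fin 3 → Vtx} {pre : List (Fin 3)} {e : Sym2 Vtx} :
    e ∈ star f pre ↔ ∃ m : Fin 3, e = s(Sum.inr pre, f m) := by
  constructor
  · intro h
    simp [star] at h
    rcases h with h | h | h
    exacts [⟨0, h⟩, ⟨1, h⟩, ⟨2, h⟩]
  · rintro ⟨m, rfl⟩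
    fin_cases m <;> simp [star]

lemma gE_shape {t : FT} : ∀ {f : Fin 3 → Vtx} {pre : List (Fin 3)},
    (∀ c, rank (f c) ≤ pre.length) → ∀ e ∈ gE f pre t,
    ∃ (a : List (Fin 3)) (x : Vtx), e = s(Sum.inr (pre ++ a), x) ∧
      rank x ≤ pre.length + a.length := by
  induction t with
  | lf =>
    intro f pre hf e he
    rw [gE, star_mem] at he
    obtain ⟨m, rfl⟩ := he
    exact ⟨[], f m, by simp, by simpa using hf m⟩
  | nd t0 t1 t2 ih0 ih1 ih2 =>
    intro f pre hf e he
    have hupdrank : ∀ c : Fin 3, ∀ c', rank ((Function.update f c (Sum.inr pre)) c') ≤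
        (pre ++ [c]).length := by
      intro c c'
      by_cases hc : c' = c
      · subst hc; simp [Function.update, rank]
      · rw [Function.update_of_ne hc]; have := hf c'; simp; omega
    rw [gE] at he
    rcases Multiset.mem_add.mp he with he | he
    · rw [star_mem] at he
      obtain ⟨m, rfl⟩ := he
      exact ⟨[], f m, by simp, by simpa using hf m⟩
    · have key : ∀ (c : Fin 3) (tc : FT),
          (∀ {f' : Fin 3 → Vtx} {pre' : List (Fin 3)},
            (∀ c', rank (f' c') ≤ pre'.length) → ∀ e ∈ gE f' pre' tc,
            ∃ a x, e = s(Sum.inr (pre' ++ a), x) ∧ rank x ≤ pre'.length + a.length) →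
          e ∈ gE (Function.update f c (Sum.inr pre)) (pre ++ [c]) tc →
          ∃ a x, e = s(Sum.inr (pre ++ a), x) ∧ rank x ≤ pre.length + a.length := by
        intro c tc ih hmem
        obtain ⟨a, x, rfl, hr⟩ := ih (hupdrank c) e hmem
        refine ⟨c :: a, x, by simp, ?_⟩
        simp at hr ⊢
        omega
      rcases Multiset.mem_add.mp he with he | he
      rcases Multiset.mem_add.mp he with he | he
      · exact key 0 t0 (fun {f' pre'} h e he => ih0 h e he) he
      · exact key 1 t1 (fun {f' pre'} h e he => ih1 h e he) he
      · exact key 2 t2 (fun {f' pre'} h e he => ih2 h e he) he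

lemma star_nodup {f : Fin 3 → Vtx} {pre : List (Fin 3)}
    (hf : ∀ c, rank (f c) ≤ pre.length)
    (hinj : ∀ c c', c ≠ c' → f c ≠ f c') : (star f pre).Nodup := by
  have hne : ∀ c, f c ≠ Sum.inr pre := by
    intro c h
    have := hf c
    rw [h] at this
    simp [rank] at this
  have key : ∀ c c' : Fin 3, c ≠ c' →
      s(Sum.inr pre, f c) ≠ (s(Sum.inr pre, f c') : Sym2 Vtx) := by
    intro c c' hcc h
    rw [Sym2.eq_iff] at h
    rcases h with ⟨-, h⟩ | ⟨h1, h2⟩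
    · exact hinj c c' hcc h
    · exact hne c h2
  simp only [star, Multiset.insert_eq_cons]
  rw [Multiset.nodup_cons, Multiset.nodup_cons]
  refine ⟨?_, ?_, Multiset.nodup_singleton _⟩
  · intro h
    simp only [Multiset.mem_cons, Multiset.mem_singleton] at h
    rcases h with h | h
    exacts [key 0 1 (by decide) h, key 0 2 (by decide) h]
  · intro h
    simp only [Multiset.mem_singleton] at h
    exact key 1 2 (by decide) h

lemma gE_nodup {t : FT} : ∀ {f : Fin 3 → Vtx} {pre : List (Fin 3)},
    (∀ c, rank (f c) ≤ pre.length) →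
    (∀ c c', c ≠ c' → f c ≠ f c') → (gE f pre t).Nodup := by
  induction t with
  | lf => intro f pre hf hinj; exact star_nodup hf hinj
  | nd t0 t1 t2 ih0 ih1 ih2 =>
    intro f pre hf hinj
    have hupdrank : ∀ c : Fin 3, ∀ c', rank ((Function.update f c (Sum.inr pre)) c') ≤
        (pre ++ [c]).length := by
      intro c c'
      by_cases hc : c' = c
      · subst hc; simp [Function.update, rank]
      · rw [Function.update_of_ne hc]; have := hf c'; simp; omega
    have hupdinj : ∀ c : Fin 3, ∀ c1 c2, c1 ≠ c2 →
        (Function.update f c (Sum.inr pre)) c1 ≠ (Function.update f c (Sum.inr pre)) c2 := by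
      intro c c1 c2 h12
      by_cases h1 : c1 = c
      · subst h1
        rw [Function.update_self, Function.update_of_ne (Ne.symm h12)]
        intro h
        have := hf c2; rw [← h] at this; simp [rank] at this
      · rw [Function.update_of_ne h1]
        by_cases h2 : c2 = c
        · subst h2
          rw [Function.update_self]
          intro h
          have := hf c1; rw [h] at this; simp [rank] at this
        · rw [Function.update_of_ne h2]; exact hinj c1 c2 h12
    -- shapes of child edges
    have hshape : ∀ (c : Fin 3) (tc : FT), ∀ e ∈ gE (Function.update f c (Sum.inr pre)) (pre ++ [c]) tc,
        ∃ a x, e = s(Sum.inr (pre ++ c :: a), x) ∧ rank x ≤ pre.length + 1 + a.length := by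
      intro c tc e he
      obtain ⟨a, x, rfl, hr⟩ := gE_shape (hupdrank c) e he
      exact ⟨a, x, by simp, by simp at hr; omega⟩
    have hdisj : ∀ (c c' : Fin 3), c ≠ c' → ∀ (tc tc' : FT),
        ∀ e ∈ gE (Function.update f c (Sum.inr pre)) (pre ++ [c]) tc,
        e ∉ gE (Function.update f c' (Sum.inr pre)) (pre ++ [c']) tc' := by
      intro c c' hcc tc tc' e he he'
      obtain ⟨a, x, rfl, hr⟩ := hshape c tc e he
      obtain ⟨a', x', heq, hr'⟩ := hshape c' tc' _ he'
      rw [Sym2.eq_iff] at heq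
      rcases heq with ⟨h1, -⟩ | ⟨h1, h2⟩
      · apply hcc
        have := List.append_cancel_left (Sum.inr.injEq .. ▸ h1 : pre ++ c :: a = pre ++ c' :: a')
        exact (List.cons.injEq .. ▸ this).1
      · have e1 := hr
        rw [h2] at e1
        have e2 := hr'
        rw [← h1] at e2
        simp [rank] at e1 e2
        omega
    have hstardisj : ∀ (c : Fin 3) (tc : FT), ∀ e ∈ star f pre,
        e ∉ gE (Function.update f c (Sum.inr pre)) (pre ++ [c]) tc := by
      intro c tc e he he'
      obtain ⟨m, rfl⟩ := star_mem.mp he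
      obtain ⟨a, x, heq, hr⟩ := hshape c tc _ he'
      rw [Sym2.eq_iff] at heq
      rcases heq with ⟨h1, -⟩ | ⟨h1, h2⟩
      · have := congrArg rank h1
        simp [rank] at this
      · have := hf m
        rw [h2] at this
        simp [rank] at this
  -- assemble
    rw [gE, Multiset.nodup_add, Multiset.nodup_add, Multiset.nodup_add]
    refine ⟨star_nodup hf hinj, ⟨⟨ih0 (hupdrank 0) (hupdinj 0), ih1 (hupdrank 1) (hupdinj 1),
      Multiset.disjoint_left.mpr (fun {e} he => hdisj 0 1 (by decide) _ _ e he)⟩,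
      ih2 (hupdrank 2) (hupdinj 2), ?_⟩, ?_⟩
    · rw [Multiset.disjoint_left]
      intro e he he'
      rcases Multiset.mem_add.mp he with he | he
      · exact hdisj 0 2 (by decide) _ _ _ he he'
      · exact hdisj 1 2 (by decide) _ _ _ he he'
    · rw [Multiset.disjoint_left]
      intro e he he'
      rcases Multiset.mem_add.mp he' with h | h
      rcases Multiset.mem_add.mp h with h2 | h2
      · exact hstardisj 0 _ _ he h2
      · exact hstardisj 1 _ _ he h2
      · exact hstardisj 2 _ _ he h


@[simp] lemma hasAddr_lf {a : List (Fin 3)} : FT.hasAddr FT.lf a ↔ a = [] := by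
  simp [FT.hasAddr]

lemma fin3_cases (c : Fin 3) : c = 0 ∨ c = 1 ∨ c = 2 := by omega

lemma gE_char {t : FT} : ∀ {f : Fin 3 → Vtx} {pre : List (Fin 3)} (e : Sym2 Vtx),
    e ∈ gE f pre t ↔ ∃ a, t.hasAddr a ∧ ∃ m : Fin 3, e = s(Sum.inr (pre ++ a), fgo f pre a m) := by
  induction t with
  | lf =>
    intro f pre e
    rw [gE, star_mem]
    constructor
    · rintro ⟨m, rfl⟩
      exact ⟨[], rfl, m, by simp [fgo]⟩
    · rintro ⟨a, ha, m, rfl⟩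
      rw [hasAddr_lf] at ha
      subst ha
      exact ⟨m, by simp [fgo]⟩
  | nd t0 t1 t2 ih0 ih1 ih2 =>
    intro f pre e
    have hch : ∀ (c : Fin 3) (a : List (Fin 3)),
        FT.hasAddr (FT.nd t0 t1 t2) (c :: a) = FT.hasAddr (![t0, t1, t2] c) a := fun _ _ => rfl
    have hfgo : ∀ (c : Fin 3) (a : List (Fin 3)) (m : Fin 3),
        fgo f pre (c :: a) m = fgo (Function.update f c (Sum.inr pre)) (pre ++ [c]) a m :=
      fun _ _ _ => rfl
    have happ : ∀ (c : Fin 3) (a : List (Fin 3)), pre ++ c :: a = (pre ++ [c]) ++ a := by simp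
    constructor
    · intro he
      rw [gE] at he
      rcases Multiset.mem_add.mp he with he | he
      · obtain ⟨m, rfl⟩ := star_mem.mp he
        exact ⟨[], trivial, m, by simp [fgo]⟩
      · rcases Multiset.mem_add.mp he with he | he
        · rcases Multiset.mem_add.mp he with he | he
          · obtain ⟨a, ha, m, heq⟩ := (ih0 e).mp he
            exact ⟨(0 : Fin 3) :: a, by rw [hch]; exact ha, m, by rw [heq, happ 0 a]; rfl⟩
          · obtain ⟨a, ha, m, heq⟩ := (ih1 e).mp he
            exact ⟨(1 : Fin 3) :: a, by rw [hch]; exact ha, m, by rw [heq, happ 1 a]; rfl⟩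
        · obtain ⟨a, ha, m, heq⟩ := (ih2 e).mp he
          exact ⟨(2 : Fin 3) :: a, by rw [hch]; exact ha, m, by rw [heq, happ 2 a]; rfl⟩
    · rintro ⟨a, ha, m, rfl⟩
      rw [gE]
      cases a with
      | nil => exact Multiset.mem_add.mpr (Or.inl (star_mem.mpr ⟨m, by simp [fgo]⟩))
      | cons c a =>
        refine Multiset.mem_add.mpr (Or.inr ?_)
        rw [hch] at ha
        rw [happ c a, hfgo]
        rcases fin3_cases c with rfl | rfl | rfl
        · exact Multiset.mem_add.mpr (Or.inl (Multiset.mem_add.mpr (Or.inl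
            ((ih0 _).mpr ⟨a, ha, m, rfl⟩))))
        · exact Multiset.mem_add.mpr (Or.inl (Multiset.mem_add.mpr (Or.inr
            ((ih1 _).mpr ⟨a, ha, m, rfl⟩))))
        · exact Multiset.mem_add.mpr (Or.inr ((ih2 _).mpr ⟨a, ha, m, rfl⟩))

lemma vec3_eval {α : Type*} (t0 t1 t2 : α) :
    (![t0, t1, t2] 0 = t0) ∧ (![t0, t1, t2] 1 = t1) ∧ (![t0, t1, t2] 2 = t2) :=
  ⟨rfl, rfl, rfl⟩

lemma star_perm (f : Fin 3 → Vtx) (pre : List (Fin 3)) (i j k : Fin 3)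
    (hij : i ≠ j) (hik : i ≠ k) (hjk : j ≠ k) :
    star f pre = {s(Sum.inr pre, f i), s(Sum.inr pre, f j), s(Sum.inr pre, f k)} := by
  rcases fin3_cases i with rfl | rfl | rfl <;> rcases fin3_cases j with rfl | rfl | rfl <;>
    rcases fin3_cases k with rfl | rfl | rfl <;>
    first
      | exact (hij rfl).elim
      | exact (hik rfl).elim
      | exact (hjk rfl).elim
      | ((simp only [star, Multiset.insert_eq_cons, ← Multiset.singleton_add]) <;> abel)

lemma kk_perm (t0 t1 t2 : FT) (i j k : Fin 3)
    (hij : i ≠ j) (hik : i ≠ k) (hjk : j ≠ k) :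
    (![t0, t1, t2] i).kk + (![t0, t1, t2] j).kk + (![t0, t1, t2] k).kk =
      t0.kk + t1.kk + t2.kk := by
  rcases fin3_cases i with rfl | rfl | rfl <;> rcases fin3_cases j with rfl | rfl | rfl <;>
    rcases fin3_cases k with rfl | rfl | rfl <;>
    first
      | exact (hij rfl).elim
      | exact (hik rfl).elim
      | exact (hjk rfl).elim
      | ((show _ = _ ; simp [vec3_eval]) <;> omega)

lemma gE_regroup (t0 t1 t2 : FT) (f : Fin 3 → Vtx) (pre : List (Fin 3)) (i j k : Fin 3)
    (hij : i ≠ j) (hik : i ≠ k) (hjk : j ≠ k) :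
    gE f pre (FT.nd t0 t1 t2) = star f pre +
      (gE (Function.update f k (Sum.inr pre)) (pre ++ [k]) (![t0, t1, t2] k) +
       gE (Function.update f i (Sum.inr pre)) (pre ++ [i]) (![t0, t1, t2] i) +
       gE (Function.update f j (Sum.inr pre)) (pre ++ [j]) (![t0, t1, t2] j)) := by
  rcases fin3_cases i with rfl | rfl | rfl <;> rcases fin3_cases j with rfl | rfl | rfl <;>
    rcases fin3_cases k with rfl | rfl | rfl <;>
    first
      | exact (hij rfl).elim
      | exact (hik rfl).elim
      | exact (hjk rfl).elim
      | ((show gE f pre (FT.nd t0 t1 t2) = _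
          rw [gE]
          simp only [Matrix.cons_val_zero, Matrix.cons_val_one, Matrix.head_cons]
          abel_nf) <;> rfl)


lemma coeEL_append {l1 l2 : List Vtx} {x : Vtx} (h : l1.getLast? = some x) :
    (ELl (l1 ++ l2) : Multiset (Sym2 Vtx)) = ↑(ELl l1) + ↑(ELl (x :: l2)) := by
  rw [ELl_append h, ← Multiset.coe_add]

lemma coeEL_cons {a b : Vtx} {l : List Vtx} (h : l.head? = some b) :
    (ELl (a :: l) : Multiset (Sym2 Vtx)) = {s(a, b)} + ↑(ELl l) := by
  rw [ELl_cons_head h, ← Multiset.cons_coe, Multiset.singleton_add]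

lemma rank_ne {u w : Vtx} (h : rank u < rank w) : u ≠ w := by
  intro he; rw [he] at h; omega

/-- specification of the recursive construction -/
def BSpec (t : FT) : Prop :=
  ∀ (f : Fin 3 → Vtx) (pre : List (Fin 3)) (i j k : Fin 3),
    i ≠ j → i ≠ k → j ≠ k →
    (∀ c, rank (f c) ≤ pre.length) →
    (∀ c c', c ≠ c' → f c ≠ f c') →
    ∃ (ext D : List Vtx) (closed : List (List Vtx)),
      ext ≠ [] ∧
      (∀ w ∈ ext, Cone pre w ∨ w = f j) ∧
      ext.Nodup ∧
      ext.getLast? = some (f j) ∧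
      (∀ w ∈ D, Cone pre w ∨ w = f k) ∧
      D.Nodup ∧
      D.head? = some (f k) ∧
      2 ≤ D.length ∧
      (∀ c ∈ closed, c.Nodup ∧ 2 ≤ c.length) ∧
      closed.length = t.kk ∧
      (ELl (f i :: ext) : Multiset (Sym2 Vtx)) + ↑(ELl D) +
        (closed.map fun c => (ELl c : Multiset (Sym2 Vtx))).sum = gE f pre t

theorem build : ∀ t : FT, BSpec t := by
  intro t
  induction t with
  | lf =>
    intro f pre i j k hij hik hjk hrank hinj
    have hvne : ∀ m : Fin 3, f m ≠ Sum.inr pre := by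
      intro m
      exact rank_ne (by have := hrank m; show rank (f m) < pre.length + 1; omega)
    refine ⟨[Sum.inr pre, f j], [f k, Sum.inr pre], [], by simp, ?_, ?_, by simp, ?_, ?_,
      by simp, by simp, by simp, by simp [FT.kk], ?_⟩
    · intro w hw
      rcases List.mem_pair.mp hw with rfl | rfl
      exacts [Or.inl (cone_self pre), Or.inr rfl]
    · simp [List.nodup_cons]
      exact fun h => (hvne j) h.symm
    · intro w hw
      rcases List.mem_pair.mp hw with rfl | rfl
      exacts [Or.inr rfl, Or.inl (cone_self pre)]
    · simp [List.nodup_cons]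
      exact hvne k
    · have h1 : s(f i, Sum.inr pre) = s(Sum.inr pre, f i) := Sym2.eq_swap
      have h2 : s(f k, Sum.inr pre) = s(Sum.inr pre, f k) := Sym2.eq_swap
      show (↑[s(f i, Sum.inr pre), s(Sum.inr pre, f j)] + ↑[s(f k, Sum.inr pre)] +
        (0 : Multiset (Sym2 Vtx))) = _
      rw [h1, h2, gE, star_perm f pre i j k hij hik hjk]
      show ({s(Sum.inr pre, f i)} + {s(Sum.inr pre, f j)} + {s(Sum.inr pre, f k)} + 0 :
        Multiset (Sym2 Vtx)) = _
      simp only [Multiset.insert_eq_cons, ← Multiset.singleton_add]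
      abel
  | nd t0 t1 t2 ih0 ih1 ih2 =>
    intro f pre i j k hij hik hjk hrank hinj
    have IH : ∀ c : Fin 3, BSpec (![t0, t1, t2] c) := by
      intro c
      rcases fin3_cases c with rfl | rfl | rfl
      exacts [ih0, ih1, ih2]
    have hur : ∀ c : Fin 3, ∀ c', rank (Function.update f c (Sum.inr pre) c') ≤
        (pre ++ [c]).length := by
      intro c c'
      by_cases hc : c' = c
      · subst hc; simp [Function.update, rank]
      · rw [Function.update_of_ne hc]; have := hrank c'; simp; omega
    have hui : ∀ c : Fin 3, ∀ c1 c2, c1 ≠ c2 →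
        Function.update f c (Sum.inr pre) c1 ≠ Function.update f c (Sum.inr pre) c2 := by
      intro c c1 c2 h12
      by_cases h1 : c1 = c
      · subst h1
        rw [Function.update_self, Function.update_of_ne (Ne.symm h12)]
        exact (rank_ne (by have := hrank c2; show rank (f c2) < pre.length + 1; omega)).symm
      · rw [Function.update_of_ne h1]
        by_cases h2 : c2 = c
        · subst h2
          rw [Function.update_self]
          exact rank_ne (by have := hrank c1; show rank (f c1) < pre.length + 1; omega)
        · rw [Function.update_of_ne h2]; exact hinj c1 c2 h12
    -- the three recursive calls
    obtain ⟨ek, Dk, Ck, eknn, eksub, eknd, eklast, Dksub, Dknd, Dkhead, Dklen, Ckprop, Ckcount,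
      Kmult⟩ := IH k (Function.update f k (Sum.inr pre)) (pre ++ [k]) i k j hik hij hjk.symm
        (hur k) (hui k)
    obtain ⟨ei, Di, Ci, einn, eisub, eind, eilast, Disub, Dind, Dihead, Dilen, Ciprop, Cicount,
      Imult⟩ := IH i (Function.update f i (Sum.inr pre)) (pre ++ [i]) i j k hij hik hjk
        (hur i) (hui i)
    obtain ⟨ej, Dj, Cj, ejnn, ejsub, ejnd, ejlast, Djsub, Djnd, Djhead, Djlen, Cjprop, Cjcount,
      Jmult⟩ := IH j (Function.update f j (Sum.inr pre)) (pre ++ [j]) k i j hik.symm hjk.symm hij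
        (hur j) (hui j)
    -- clean up the update evaluations
    rw [Function.update_self] at eklast eksub
    rw [Function.update_of_ne hjk] at Dksub Dkhead
    rw [Function.update_of_ne hik] at Kmult
    rw [Function.update_self] at Imult
    rw [Function.update_of_ne hij.symm] at eilast eisub
    rw [Function.update_of_ne hik.symm] at Disub Dihead
    rw [Function.update_of_ne hjk.symm] at Jmult
    rw [Function.update_of_ne hij] at ejlast ejsub
    rw [Function.update_self] at Djsub Djhead
    -- basic distinctness facts
    have hfv : ∀ m : Fin 3, f m ≠ Sum.inr pre := by
      intro m
      exact rank_ne (by have := hrank m; show rank (f m) < pre.length + 1; omega)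
    have hconef : ∀ (c : Fin 3) (m : Fin 3) (w : Vtx), Cone (pre ++ [c]) w → w ≠ f m := by
      intro c m w hc heq
      have h1 := cone_rank hc
      rw [heq] at h1
      have := hrank m
      simp at h1
      omega
    have hconev : ∀ (c : Fin 3) (w : Vtx), Cone (pre ++ [c]) w → w ≠ Sum.inr pre := by
      intro c w hc heq
      have h1 := cone_rank hc
      rw [heq] at h1
      simp [rank] at h1
    -- the assembled pieces
    refine ⟨ek ++ ei, f k :: Dj,
      ((Di.reverse ++ ej) ++ (Sum.inr pre :: Dk)) :: (Ck ++ Ci ++ Cj), ?_, ?_, ?_, ?_, ?_, ?_,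
      ?_, ?_, ?_, ?_, ?_⟩
    · simp [eknn]
    · intro w hw
      rcases List.mem_append.mp hw with hw | hw
      · rcases eksub w hw with hc | rfl
        exacts [Or.inl (cone_mono k hc), Or.inl (cone_self pre)]
      · rcases eisub w hw with hc | rfl
        exacts [Or.inl (cone_mono i hc), Or.inr rfl]
    · refine List.Nodup.append eknd eind ?_
      intro w hwk hwi
      rcases eksub w hwk with hc | rfl
      · rcases eisub w hwi with hc' | rfl
        · exact cone_disj (Ne.symm hik) hc hc'
        · exact hconef k j _ hc rfl
      · rcases eisub _ hwi with hc' | heq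
        · exact hconev i _ hc' rfl
        · exact hfv j heq.symm
    · rw [List.getLast?_append_of_ne_nil _ einn]
      exact eilast
    · intro w hw
      rcases List.mem_cons.mp hw with rfl | hw
      · exact Or.inr rfl
      · rcases Djsub w hw with hc | rfl
        exacts [Or.inl (cone_mono j hc), Or.inl (cone_self pre)]
    · rw [List.nodup_cons]
      refine ⟨?_, Djnd⟩
      intro hmem
      rcases Djsub _ hmem with hc | heq
      · exact hconef j k _ hc rfl
      · exact hfv k heq
    · rfl
    · simp; omega
    · intro c hc
      rcases List.mem_cons.mp hc with rfl | hc
      · constructor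
        · -- Nodup of the merged closed path
          refine List.Nodup.append (List.Nodup.append (List.nodup_reverse.mpr Dind) ejnd ?_)
            (List.nodup_cons.mpr ⟨?_, Dknd⟩) ?_
          · intro w hwi hwj
            rw [List.mem_reverse] at hwi
            rcases Disub w hwi with hc | rfl
            · rcases ejsub w hwj with hc' | rfl
              · exact cone_disj hij hc hc'
              · exact hconef i i _ hc rfl
            · rcases ejsub _ hwj with hc' | heq
              · exact (hconef j k _ hc') rfl
              · exact hinj k i hik.symm heq
          · intro hmem
            rcases Dksub _ hmem with hc | heq
            · exact hconev k _ hc rfl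
            · exact (hfv j) heq.symm
          · intro w hw hw'
            have hwB : w = Sum.inr pre ∨ w ∈ Dk := List.mem_cons.mp hw'
            have hwA : (Cone (pre ++ [i]) w ∨ w = f k) ∨ (Cone (pre ++ [j]) w ∨ w = f i) := by
              rcases List.mem_append.mp hw with hw | hw
              · exact Or.inl (Disub w (List.mem_reverse.mp hw))
              · exact Or.inr (ejsub w hw)
            have hwB' : w = Sum.inr pre ∨ (Cone (pre ++ [k]) w ∨ w = f j) := by
              rcases hwB with rfl | hw2
              · exact Or.inl rfl
              · exact Or.inr (Dksub w hw2)
            rcases hwA with (hc | rfl) | (hc | rfl)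
            · rcases hwB' with rfl | (hc' | rfl)
              · exact hconev i _ hc rfl
              · exact cone_disj hik hc hc'
              · exact hconef i j _ hc rfl
            · rcases hwB' with heq | (hc' | heq)
              · exact hfv k heq
              · exact hconef k k _ hc' rfl
              · exact hinj k j hjk.symm heq
            · rcases hwB' with rfl | (hc' | rfl)
              · exact hconev j _ hc rfl
              · exact cone_disj hjk hc hc'
              · exact hconef j j _ hc rfl
            · rcases hwB' with heq | (hc' | heq)
              · exact hfv i heq
              · exact hconef k i _ hc' rfl
              · exact hinj i j hij heq
        · -- length
          simp
          omega
      · rcases List.mem_append.mp hc with hc2 | hc2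
        · rcases List.mem_append.mp hc2 with hc3 | hc3
          exacts [Ckprop c hc3, Ciprop c hc3]
        · exact Cjprop c hc2
    · simp only [List.length_cons, List.length_append, FT.kk]
      have := kk_perm t0 t1 t2 k i j hik.symm hjk.symm hij
      omega
    · -- the multiset identity
      have e1 : (ELl (f i :: (ek ++ ei)) : Multiset (Sym2 Vtx)) =
          ↑(ELl (f i :: ek)) + ↑(ELl (Sum.inr pre :: ei)) := by
        have h : f i :: (ek ++ ei) = (f i :: ek) ++ ei := rfl
        rw [h, coeEL_append (by
          rw [show f i :: ek = [f i] ++ ek from rfl, List.getLast?_append_of_ne_nil _ eknn]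
          exact eklast)]
      have e2 : (ELl (f k :: Dj) : Multiset (Sym2 Vtx)) = {s(f k, Sum.inr pre)} + ↑(ELl Dj) :=
        coeEL_cons Djhead
      have eM : (ELl ((Di.reverse ++ ej) ++ (Sum.inr pre :: Dk)) : Multiset (Sym2 Vtx)) =
          ↑(ELl Di) + ↑(ELl (f k :: ej)) +
            ({s(f i, Sum.inr pre)} + ({s(Sum.inr pre, f j)} + ↑(ELl Dk))) := by
        rw [coeEL_append (by rw [List.getLast?_append_of_ne_nil _ ejnn]; exact ejlast)]
        rw [coeEL_append (by rw [List.getLast?_reverse]; exact Dihead)]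
        rw [ELl_reverse]
        rw [coeEL_cons (l := Sum.inr pre :: Dk) (by rfl)]
        rw [coeEL_cons Dkhead]
      rw [e1, e2]
      simp only [List.map_cons, List.map_append, List.sum_cons, List.sum_append]
      rw [eM]
      rw [gE_regroup t0 t1 t2 f pre i j k hij hik hjk]
      rw [← Kmult, ← Imult, ← Jmult]
      rw [star_perm f pre i j k hij hik hjk]
      have sw1 : s(f k, Sum.inr pre) = s(Sum.inr pre, f k) := Sym2.eq_swap
      have sw2 : s(f i, Sum.inr pre) = s(Sum.inr pre, f i) := Sym2.eq_swap
      rw [sw1, sw2]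
      simp only [Multiset.insert_eq_cons, ← Multiset.singleton_add]
      abel


lemma head_single_mem {T : Finset (List (Fin 3))} (hT : IsStackTree T) :
    ∀ (n : ℕ) (p : List (Fin 3)), p.length ≤ n → p ∈ T → p ≠ [] → ∃ c, [c] ∈ T := by
  intro n
  induction n with
  | zero =>
    intro p hl hp hne
    cases p with
    | nil => exact absurd rfl hne
    | cons a q => simp at hl
  | succ n ih =>
    intro p hl hp hne
    rcases List.eq_nil_or_concat p with rfl | ⟨q, c, hqc⟩
    · exact absurd rfl hne
    · rw [List.concat_eq_append] at hqc
      subst hqc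
      cases hq : q with
      | nil => exact ⟨c, by simpa [hq] using hp⟩
      | cons a q' =>
        subst hq
        have hqT : (a :: q') ∈ T := hT _ c hp
        have : (a :: q').length ≤ n := by
          have := hl
          simp at this ⊢
          omega
        exact ih _ this hqT (by simp)

/-- the subtree finset below child `c` -/
def subT (T : Finset (List (Fin 3))) (c : Fin 3) : Finset (List (Fin 3)) :=
  (T.filter (fun p => p.head? = some c)).image List.tail

lemma mem_subT {T : Finset (List (Fin 3))} {c : Fin 3} {q : List (Fin 3)} :
    q ∈ subT T c ↔ c :: q ∈ T := by
  constructor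
  · intro h
    obtain ⟨p, hp, htl⟩ := Finset.mem_image.mp h
    obtain ⟨hpT, hhd⟩ := Finset.mem_filter.mp hp
    cases p with
    | nil => simp at hhd
    | cons a l =>
      simp at hhd htl
      subst hhd; subst htl
      exact hpT
  · intro h
    exact Finset.mem_image.mpr ⟨c :: q, Finset.mem_filter.mpr ⟨h, by simp⟩, rfl⟩

lemma subT_card {T : Finset (List (Fin 3))} (hroot : ([] : List (Fin 3)) ∈ T) :
    T.card = 1 + (subT T 0).card + (subT T 1).card + (subT T 2).card := by
  have hinj : ∀ c : Fin 3, (subT T c).card = (T.filter (fun p => p.head? = some c)).card := by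
    intro c
    apply Finset.card_image_of_injOn
    intro p hp p' hp' htl
    have h1 := (Finset.mem_filter.mp hp).2
    have h2 := (Finset.mem_filter.mp hp').2
    cases p with
    | nil => simp at h1
    | cons a l =>
      cases p' with
      | nil => simp at h2
      | cons a' l' =>
        simp at h1 h2 htl
        subst h1; subst h2; subst htl
        rfl
  have hsplit : T = insert [] ((T.filter (fun p => p.head? = some (0 : Fin 3))) ∪
      (T.filter (fun p => p.head? = some (1 : Fin 3))) ∪
      (T.filter (fun p => p.head? = some (2 : Fin 3)))) := by
    ext p
    constructor
    · intro hp
      cases p with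
      | nil => exact Finset.mem_insert_self _ _
      | cons a l =>
        refine Finset.mem_insert_of_mem ?_
        rcases fin3_cases a with rfl | rfl | rfl
        · exact Finset.mem_union_left _ (Finset.mem_union_left _
            (Finset.mem_filter.mpr ⟨hp, by simp⟩))
        · exact Finset.mem_union_left _ (Finset.mem_union_right _
            (Finset.mem_filter.mpr ⟨hp, by simp⟩))
        · exact Finset.mem_union_right _ (Finset.mem_filter.mpr ⟨hp, by simp⟩)
    · intro hp
      rcases Finset.mem_insert.mp hp with rfl | hp
      · exact hroot
      · rcases Finset.mem_union.mp hp with hp | hp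
        · rcases Finset.mem_union.mp hp with hp | hp
          exacts [(Finset.mem_filter.mp hp).1, (Finset.mem_filter.mp hp).1]
        · exact (Finset.mem_filter.mp hp).1
  have hd01 : Disjoint (T.filter (fun p => p.head? = some (0 : Fin 3)))
      (T.filter (fun p => p.head? = some (1 : Fin 3))) := by
    rw [Finset.disjoint_left]
    intro p h1 h2
    have e1 := (Finset.mem_filter.mp h1).2
    have e2 := (Finset.mem_filter.mp h2).2
    rw [e1] at e2
    exact absurd (Option.some.inj e2) (by decide)
  have hd012 : Disjoint ((T.filter (fun p => p.head? = some (0 : Fin 3))) ∪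
      (T.filter (fun p => p.head? = some (1 : Fin 3))))
      (T.filter (fun p => p.head? = some (2 : Fin 3))) := by
    rw [Finset.disjoint_left]
    intro p h1 h2
    have h2' := (Finset.mem_filter.mp h2).2
    rcases Finset.mem_union.mp h1 with h1 | h1 <;>
      · have e1 := (Finset.mem_filter.mp h1).2
        rw [e1] at h2'
        exact absurd (Option.some.inj h2') (by decide)
  have hnotmem : ([] : List (Fin 3)) ∉ ((T.filter (fun p => p.head? = some (0 : Fin 3))) ∪
      (T.filter (fun p => p.head? = some (1 : Fin 3))) ∪
      (T.filter (fun p => p.head? = some (2 : Fin 3)))) := by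
    intro h
    rcases Finset.mem_union.mp h with h | h
    · rcases Finset.mem_union.mp h with h | h <;> simpa using (Finset.mem_filter.mp h).2
    · simpa using (Finset.mem_filter.mp h).2
  rw [hinj 0, hinj 1, hinj 2]
  conv_lhs => rw [hsplit]
  rw [Finset.card_insert_of_notMem hnotmem, Finset.card_union_of_disjoint hd012,
    Finset.card_union_of_disjoint hd01]
  omega

lemma subT_stack {T : Finset (List (Fin 3))} (hT : IsStackTree T) (c : Fin 3) :
    IsStackTree (subT T c) := by
  intro p i hp
  rw [mem_subT] at hp ⊢
  exact hT (c :: p) i (by simpa using hp)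

lemma subT_full {T : Finset (List (Fin 3))} (hfull : IsFull T) (c : Fin 3)
    (hc : [c] ∈ T) : IsFull (subT T c) := by
  constructor
  · rw [mem_subT]; simpa using hc
  · intro p hp
    rw [mem_subT] at hp
    rcases hfull.2 (c :: p) hp with h | h
    · left; intro i; rw [mem_subT]; simpa using h i
    · right; intro i; rw [mem_subT]; simpa using h i

lemma toFT : ∀ (n : ℕ) (T : Finset (List (Fin 3))), T.card ≤ n → IsStackTree T → IsFull T →
    ∃ t : FT, (∀ p, p ∈ T ↔ t.hasAddr p) ∧ T.card = t.Nn := by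
  intro n
  induction n with
  | zero =>
    intro T hcard hT hfull
    have : 0 < T.card := Finset.card_pos.mpr ⟨[], hfull.1⟩
    omega
  | succ n ih =>
    intro T hcard hT hfull
    rcases hfull.2 [] hfull.1 with hbr | hlf
    · -- branching root
      have hsub : ∀ c : Fin 3, ∃ tc : FT,
          (∀ q, q ∈ subT T c ↔ tc.hasAddr q) ∧ (subT T c).card = tc.Nn := by
        intro c
        have hclt : (subT T c).card ≤ n := by
          have := subT_card hfull.1 (T := T)
          have h0 : 0 ≤ (subT T 0).card := Nat.zero_le _
          rcases fin3_cases c with rfl | rfl | rfl <;> omega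
        exact ih _ hclt (subT_stack hT c) (subT_full hfull c
          (by have := hbr c; rwa [List.nil_append] at this))
      choose tc htc using hsub
      refine ⟨FT.nd (tc 0) (tc 1) (tc 2), ?_, ?_⟩
      · intro p
        cases p with
        | nil => exact ⟨fun _ => trivial, fun _ => hfull.1⟩
        | cons c q =>
          have h1 : (c :: q) ∈ T ↔ q ∈ subT T c := mem_subT.symm
          have h2 : FT.hasAddr (FT.nd (tc 0) (tc 1) (tc 2)) (c :: q) =
              FT.hasAddr (![tc 0, tc 1, tc 2] c) q := rfl
          have h3 : ![tc 0, tc 1, tc 2] c = tc c := by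
            rcases fin3_cases c with rfl | rfl | rfl <;> rfl
          rw [h1, h2, h3]
          exact (htc c).1 q
      · rw [subT_card hfull.1, (htc 0).2, (htc 1).2, (htc 2).2]
        show _ = FT.Nn _
        rw [FT.Nn]
    · -- leaf root
      have hsingle : T = {[]} := by
        apply Finset.eq_singleton_iff_unique_mem.mpr
        refine ⟨hfull.1, ?_⟩
        intro p hp
        by_contra hne
        obtain ⟨c, hc⟩ := head_single_mem hT p.length p le_rfl hp hne
        exact hlf c (by rwa [List.nil_append])
      refine ⟨FT.lf, ?_, by rw [hsingle]; rfl⟩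
      intro p
      rw [hsingle]
      simp


/-- the initial outer face -/
def f₀ : Fin 3 → Vtx := fun m => Sum.inl m

/-- the three triangle edges -/
def triM : Multiset (Sym2 Vtx) :=
  {s(Sum.inl 0, Sum.inl 1), s(Sum.inl 0, Sum.inl 2), s(Sum.inl 1, Sum.inl 2)}

lemma f₀rank : ∀ c, rank (f₀ c) ≤ ([] : List (Fin 3)).length := by
  intro c; simp [f₀, rank]

lemma f₀inj : ∀ c c', c ≠ c' → f₀ c ≠ f₀ c' := by
  intro c c' h hh
  exact h (Sum.inl_injective hh)

lemma faceAt_eq (p : List (Fin 3)) :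
    faceAt p = (fgo f₀ [] p 0, fgo f₀ [] p 1, fgo f₀ [] p 2) := face_trip p f₀ []

lemma edge_mem_iff {T : Finset (List (Fin 3))} {t : FT}
    (hmem : ∀ p, p ∈ T ↔ t.hasAddr p) (e : Sym2 Vtx) :
    e ∈ (graphOf T).edgeSet ↔ e ∈ triM + gE f₀ [] t := by
  rw [graphOf, SimpleGraph.edgeSet_fromEdgeSet]
  constructor
  · rintro ⟨hS, -⟩
    rcases hS with h | h
    · refine Multiset.mem_add.mpr (Or.inl ?_)
      rcases h with h | h | h
      · subst h; simp [triM]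
      · subst h; simp [triM]
      · rw [Set.mem_singleton_iff] at h; subst h; simp [triM]
    · obtain ⟨p, hp, x, hx, rfl⟩ := h
      rw [faceAt_eq] at hx
      simp only at hx
      have hxm : ∃ m : Fin 3, x = fgo f₀ [] p m := by
        rcases hx with h | h | h
        exacts [⟨0, h⟩, ⟨1, h⟩, ⟨2, h⟩]
      obtain ⟨m, rfl⟩ := hxm
      refine Multiset.mem_add.mpr (Or.inr ?_)
      exact gE_char _ |>.mpr ⟨p, (hmem p).mp hp, m, by simp⟩
  · intro h
    rcases Multiset.mem_add.mp h with h | h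
    · have h3 : e = s(Sum.inl 0, Sum.inl 1) ∨ e = s(Sum.inl 0, Sum.inl 2) ∨
          e = s(Sum.inl 1, Sum.inl 2) := by
        simpa [triM] using h
      constructor
      · rcases h3 with rfl | rfl | rfl
        · exact Or.inl (Set.mem_insert _ _)
        · exact Or.inl (Set.mem_insert_of_mem _ (Set.mem_insert _ _))
        · exact Or.inl (Set.mem_insert_of_mem _ (Set.mem_insert_of_mem _ rfl))
      · rcases h3 with rfl | rfl | rfl <;>
          · intro hd
            simp only [Sym2.diagSet, Set.mem_setOf_eq, Sym2.isDiag_iff_proj_eq] at hd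
            simp at hd
    · obtain ⟨a, ha, m, rfl⟩ := (gE_char _).mp h
      have hrk : rank (fgo f₀ [] a m) ≤ a.length := by
        have := fgo_rank a f₀ [] f₀rank m
        simpa using this
      have hne : Sum.inr ([] ++ a) ≠ fgo f₀ [] a m := by
        apply Ne.symm
        apply rank_ne
        show rank _ < ([] ++ a : List (Fin 3)).length + 1
        simp
        omega
      constructor
      · refine Or.inr ⟨a, (hmem a).mpr ha, fgo f₀ [] a m, ?_, by simp⟩
        rw [faceAt_eq]
        rcases fin3_cases m with rfl | rfl | rfl
        exacts [Or.inl rfl, Or.inr (Or.inl rfl), Or.inr (Or.inr rfl)]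
      · intro hd
        simp only [Sym2.diagSet, Set.mem_setOf_eq, Sym2.isDiag_iff_proj_eq] at hd
        exact hne hd

lemma triM_nodup : triM.Nodup := by
  have h1 : s(Sum.inl 0, Sum.inl 1) ≠ (s(Sum.inl 0, Sum.inl 2) : Sym2 Vtx) := by
    intro h; rw [Sym2.eq_iff] at h; rcases h with ⟨-, h⟩ | ⟨h, -⟩ <;> simp at h
  have h2 : s(Sum.inl 0, Sum.inl 1) ≠ (s(Sum.inl 1, Sum.inl 2) : Sym2 Vtx) := by
    intro h; rw [Sym2.eq_iff] at h; rcases h with ⟨h, -⟩ | ⟨h, -⟩ <;> simp at h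
  have h3 : s(Sum.inl 0, Sum.inl 2) ≠ (s(Sum.inl 1, Sum.inl 2) : Sym2 Vtx) := by
    intro h; rw [Sym2.eq_iff] at h; rcases h with ⟨h, -⟩ | ⟨-, h⟩ <;> simp at h
  simp only [triM, Multiset.insert_eq_cons, Multiset.nodup_cons, Multiset.mem_cons,
    Multiset.mem_singleton, Multiset.nodup_singleton]
  tauto

lemma total_nodup (t : FT) : (triM + gE f₀ [] t).Nodup := by
  rw [Multiset.nodup_add]
  refine ⟨triM_nodup, gE_nodup f₀rank f₀inj, ?_⟩
  rw [Multiset.disjoint_left]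
  intro e he hge
  obtain ⟨a, x, rfl, -⟩ := gE_shape f₀rank e hge
  have h3 : s(Sum.inr ([] ++ a), x) = (s(Sum.inl 0, Sum.inl 1) : Sym2 Vtx) ∨
      s(Sum.inr ([] ++ a), x) = (s(Sum.inl 0, Sum.inl 2) : Sym2 Vtx) ∨
      s(Sum.inr ([] ++ a), x) = (s(Sum.inl 1, Sum.inl 2) : Sym2 Vtx) := by
    simpa [triM] using he
  rcases h3 with h | h | h <;>
    · rw [Sym2.eq_iff] at h
      rcases h with ⟨h, -⟩ | ⟨h, -⟩ <;> simp at h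

lemma mem_list_sum {e : Sym2 Vtx} : ∀ (L : List (Multiset (Sym2 Vtx))),
    (e ∈ L.sum ↔ ∃ m ∈ L, e ∈ m) := by
  intro L
  induction L with
  | nil => simp
  | cons m L ih =>
    rw [List.sum_cons]
    constructor
    · intro h
      rcases Multiset.mem_add.mp h with h | h
      · exact ⟨m, by simp, h⟩
      · obtain ⟨m', hm', he⟩ := ih.mp h
        exact ⟨m', by simp [hm'], he⟩
    · rintro ⟨m', hm', he⟩
      rcases List.mem_cons.mp hm' with rfl | hm'
      · exact Multiset.mem_add.mpr (Or.inl he)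
      · exact Multiset.mem_add.mpr (Or.inr (ih.mpr ⟨m', hm', he⟩))

lemma list_multiset_pairwise : ∀ (L : List (Multiset (Sym2 Vtx))), L.sum.Nodup →
    L.Pairwise (fun s t => ∀ e ∈ s, e ∉ t) := by
  intro L
  induction L with
  | nil => intro; exact List.Pairwise.nil
  | cons m L ih =>
    intro h
    rw [List.sum_cons, Multiset.nodup_add] at h
    refine List.Pairwise.cons ?_ (ih h.2.1)
    intro m' hm' e he hem'
    have : e ∈ L.sum := (mem_list_sum L).mpr ⟨m', hm', hem'⟩
    exact Multiset.disjoint_left.mp h.2.2 he this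

/-- build a `PathIn` from a list with properties -/
def mkPath' (G : SimpleGraph Vtx) : (l : List Vtx) → 2 ≤ l.length → l.Nodup →
    (∀ e ∈ ELl l, e ∈ G.edgeSet) → PathIn G
  | [], h, _, _ => absurd h (by simp)
  | [_], h, _, _ => absurd h (by simp)
  | a :: b :: rest, _, hnd, hE => mkPath G a b rest (chain_of_ELl a (b :: rest) hE) hnd

lemma mkPath'_edges (G : SimpleGraph Vtx) : ∀ (l : List Vtx) (h2 : 2 ≤ l.length)
    (hnd : l.Nodup) (hE : ∀ e ∈ ELl l, e ∈ G.edgeSet),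
    (mkPath' G l h2 hnd hE).walk.edges = ELl l := by
  intro l h2 hnd hE
  match l with
  | [] => simp at h2
  | [_] => simp at h2
  | a :: b :: rest =>
    simp only [mkPath']
    exact mkPath_edges a b rest (chain_of_ELl a (b :: rest) hE) hnd

/-- turn a list of good vertex lists into paths -/
def pathsOf (G : SimpleGraph Vtx) : (L : List (List Vtx)) →
    (∀ c ∈ L, 2 ≤ c.length ∧ c.Nodup ∧ (∀ e ∈ ELl c, e ∈ G.edgeSet)) → List (PathIn G)
  | [], _ => []
  | c :: L, h =>
      mkPath' G c (h c (by simp)).1 (h c (by simp)).2.1 (h c (by simp)).2.2 ::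
        pathsOf G L (fun c' hc' => h c' (by simp [hc']))

lemma pathsOf_edges (G : SimpleGraph Vtx) : ∀ (L : List (List Vtx)) (h),
    (pathsOf G L h).map (fun p => (p.walk.edges : Multiset (Sym2 Vtx))) =
      L.map (fun c => (ELl c : Multiset (Sym2 Vtx))) := by
  intro L
  induction L with
  | nil => intro h; rfl
  | cons c L ih =>
    intro h
    show _ :: _ = _ :: _
    simp only [mkPath'_edges]
    rw [ih]

lemma pathsOf_length (G : SimpleGraph Vtx) : ∀ (L : List (List Vtx)) (h),
    (pathsOf G L h).length = L.length := by
  intro L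
  induction L with
  | nil => intro h; rfl
  | cons c L ih =>
    intro h
    show _ + 1 = _ + 1
    rw [ih]

end PC


/-- Every full planar 3-tree on n vertices admits a path cover of size at most ⌈n/3⌉
(which is (n+2)/3 in natural-number arithmetic; here n = T.card + 3). -/
theorem stmt_11 (T : Finset (List (Fin 3))) (hT : IsStackTree T) (hfull : IsFull T) :
    ∃ ps : List (PathIn (graphOf T)), IsPathCover (graphOf T) ps ∧
      ps.length ≤ (T.card + 3 + 2) / 3 := by
  classical
  obtain ⟨t, hmem, hcard⟩ := PC.toFT T.card T le_rfl hT hfull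
  obtain ⟨ext, D, closed, hne, hextsub, hextnd, hextlast, hDsub, hDnd, hDhead, hDlen, hcl, hclen,
    hmult⟩ := PC.build t PC.f₀ [] 0 1 2 (by decide) (by decide) (by decide) PC.f₀rank PC.f₀inj
  simp only [PC.f₀] at hextsub hextlast hDsub hDhead hmult
  -- the two special pieces
  set stub : List Vtx := (Sum.inl 0 : Vtx) :: (ext ++ [Sum.inl 2]) with hstub_def
  set D' : List Vtx := (Sum.inl 1 : Vtx) :: (Sum.inl 0 : Vtx) :: D with hD'_def
  -- decompositions of their edge multisets
  have hstub_decomp : (PC.ELl stub : Multiset (Sym2 Vtx)) =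
      ↑(PC.ELl ((Sum.inl 0 : Vtx) :: ext)) + ↑(PC.ELl [(Sum.inl 1 : Vtx), Sum.inl 2]) := by
    rw [hstub_def]
    rw [show (Sum.inl 0 : Vtx) :: (ext ++ [Sum.inl 2]) =
      ((Sum.inl 0 : Vtx) :: ext) ++ [Sum.inl 2] from rfl]
    rw [PC.coeEL_append (x := (Sum.inl 1 : Vtx)) (by
      rw [show (Sum.inl 0 : Vtx) :: ext = [Sum.inl 0] ++ ext from rfl,
        List.getLast?_append_of_ne_nil _ hne]
      exact hextlast)]
  have hD'_decomp : (PC.ELl D' : Multiset (Sym2 Vtx)) =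
      {s(Sum.inl 1, Sum.inl 0)} + ({s(Sum.inl 0, Sum.inl 2)} + ↑(PC.ELl D)) := by
    rw [hD'_def]
    rw [PC.coeEL_cons (l := (Sum.inl 0 : Vtx) :: D) (b := (Sum.inl 0 : Vtx)) rfl,
      PC.coeEL_cons hDhead]
  -- the total multiset identity
  have htot : (PC.ELl stub : Multiset (Sym2 Vtx)) + (↑(PC.ELl D') +
      ((closed.map fun c => (PC.ELl c : Multiset (Sym2 Vtx))).sum)) =
      PC.triM + PC.gE PC.f₀ [] t := by
    rw [hstub_decomp, hD'_decomp, ← hmult]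
    rw [show s(Sum.inl 1, (Sum.inl 0 : Vtx)) = s(Sum.inl 0, Sum.inl 1) from Sym2.eq_swap]
    rw [show (PC.ELl [(Sum.inl 1 : Vtx), Sum.inl 2] : Multiset (Sym2 Vtx)) =
      {s(Sum.inl 1, Sum.inl 2)} from rfl]
    simp only [PC.triM, Multiset.insert_eq_cons, ← Multiset.singleton_add]
    abel
  have hLsum : (((stub :: D' :: closed).map fun c => (PC.ELl c : Multiset (Sym2 Vtx))).sum) =
      PC.triM + PC.gE PC.f₀ [] t := by
    rw [List.map_cons, List.map_cons, List.sum_cons, List.sum_cons]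
    exact htot
  -- membership in the graph
  have hin : ∀ c ∈ (stub :: D' :: closed), ∀ e ∈ PC.ELl c, e ∈ (graphOf T).edgeSet := by
    intro c hc e he
    refine (PC.edge_mem_iff hmem e).mpr ?_
    rw [← hLsum]
    refine (PC.mem_list_sum _).mpr ⟨↑(PC.ELl c), List.mem_map_of_mem hc, ?_⟩
    simpa using he
  -- vertex classification facts
  have hext_cases : ∀ w ∈ ext, (∃ a : List (Fin 3), w = Sum.inr a) ∨ w = Sum.inl 1 := by
    intro w hw
    rcases hextsub w hw with hc | rfl
    · obtain ⟨a, rfl⟩ := hc; exact Or.inl ⟨a, rfl⟩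
    · exact Or.inr rfl
  have hD_cases : ∀ w ∈ D, (∃ a : List (Fin 3), w = Sum.inr a) ∨ w = Sum.inl 2 := by
    intro w hw
    rcases hDsub w hw with hc | rfl
    · obtain ⟨a, rfl⟩ := hc; exact Or.inl ⟨a, rfl⟩
    · exact Or.inr rfl
  -- nodup of the special pieces
  have hstubnd : stub.Nodup := by
    rw [hstub_def, List.nodup_cons]
    constructor
    · intro hmem2
      rcases List.mem_append.mp hmem2 with h | h
      · rcases hext_cases _ h with ⟨a, ha⟩ | ha <;> simp at ha
      · simp at h
    · refine List.Nodup.append hextnd (List.nodup_singleton _) ?_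
      intro w hw hw2
      rw [List.mem_singleton] at hw2
      subst hw2
      rcases hext_cases _ hw with ⟨a, ha⟩ | ha <;> simp at ha
  have hD'nd : D'.Nodup := by
    rw [hD'_def, List.nodup_cons, List.nodup_cons]
    refine ⟨?_, ?_, hDnd⟩
    · intro hmem2
      rcases List.mem_cons.mp hmem2 with h | h
      · simp at h
      · rcases hD_cases _ h with ⟨a, ha⟩ | ha <;> simp at ha
    · intro hmem2
      rcases hD_cases _ hmem2 with ⟨a, ha⟩ | ha <;> simp at ha
  -- the good-list property
  have hLgood : ∀ c ∈ (stub :: D' :: closed),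
      2 ≤ c.length ∧ c.Nodup ∧ (∀ e ∈ PC.ELl c, e ∈ (graphOf T).edgeSet) := by
    intro c hc
    refine ⟨?_, ?_, hin c hc⟩
    · rcases List.mem_cons.mp hc with rfl | hc2
      · simp [hstub_def]
      · rcases List.mem_cons.mp hc2 with rfl | hc3
        · simp [hD'_def]
        · exact (hcl c hc3).2
    · rcases List.mem_cons.mp hc with rfl | hc2
      · exact hstubnd
      · rcases List.mem_cons.mp hc2 with rfl | hc3
        · exact hD'nd
        · exact (hcl c hc3).1
  refine ⟨PC.pathsOf (graphOf T) (stub :: D' :: closed) hLgood, ⟨?_, ?_⟩, ?_⟩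
  · -- pairwise edge-disjoint
    have hmapsum : ((PC.pathsOf (graphOf T) (stub :: D' :: closed) hLgood).map
        (fun p => (p.walk.edges : Multiset (Sym2 Vtx)))).sum = PC.triM + PC.gE PC.f₀ [] t := by
      rw [PC.pathsOf_edges]
      exact hLsum
    have hnd := PC.total_nodup t
    rw [← hmapsum] at hnd
    have hpw := PC.list_multiset_pairwise _ hnd
    rw [List.pairwise_map] at hpw
    refine hpw.imp ?_
    intro p q h e he
    intro hq
    exact h e (by simpa using he) (by simpa using hq)
  · -- coverage
    intro e
    rw [PC.edge_mem_iff hmem e, ← hLsum, ← PC.pathsOf_edges (graphOf T) _ hLgood]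
    rw [PC.mem_list_sum]
    constructor
    · rintro ⟨m, hm, hem⟩
      obtain ⟨p, hp, rfl⟩ := List.mem_map.mp hm
      exact ⟨p, hp, by simpa using hem⟩
    · rintro ⟨p, hp, hep⟩
      exact ⟨_, List.mem_map_of_mem hp, by simpa using hep⟩
  · -- the count
    rw [PC.pathsOf_length]
    have h1 : T.card = 3 * t.kk + 1 := by rw [hcard, PC.FT.Nn_eq]
    simp only [List.length_cons, hclen]
    omega
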